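/- Let U be a nonempty open convex cone in E = ℝ^n and let φ : E → ℝ be continuous on E and differentiable on U, with differential F(u) = dφ(u) ∈ E* for u ∈ U. Assume: (1) φ is concave on U; (2) φ is positively 1-homogeneous; (3) φ > 0 on U and φ = 0 on E ∖ U. Let C₁ = {l ∈ E* : l(u) ≥ φ(u) for all u ∈ U} and let C₁° denote the interior of C₁ in E*. Then C₁° ⊆ {r • F(u) : r ∈ ℝ, r ≥ 1, u ∈ U} ⊆ C₁. -/

import Mathlib

open Filter Topology Set

lemma euler_aux {E : Type*} [NormedAddCommGroup E] [NormedSpace ℝ E]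
    {φ : E → ℝ} (hhom : ∀ t : ℝ, 0 < t → ∀ x : E, φ (t • x) = t * φ x)
    {u : E} (hd : DifferentiableAt ℝ φ u) : fderiv ℝ φ u u = φ u := by
  have hg : HasDerivAt (fun t : ℝ => t • u) u 1 := by
    simpa using (hasDerivAt_id (1:ℝ)).smul_const u
  have h1 : HasDerivAt (fun t : ℝ => φ (t • u)) (fderiv ℝ φ u u) 1 := by
    have hφ : HasFDerivAt φ (fderiv ℝ φ u) ((fun t : ℝ => t • u) 1) := by
      simpa using hd.hasFDerivAt
    exact hφ.comp_hasDerivAt 1 hg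
  have h2 : HasDerivAt (fun t : ℝ => t * φ u) (φ u) 1 := by
    simpa using (hasDerivAt_id (1:ℝ)).mul_const (φ u)
  have heq : (fun t : ℝ => φ (t • u)) =ᶠ[𝓝 (1:ℝ)] fun t => t * φ u := by
    filter_upwards [eventually_gt_nhds (by norm_num : (0:ℝ) < 1)] with t ht
    exact hhom t ht u
  exact h1.unique (h2.congr_of_eventuallyEq heq)

lemma grad_ineq {E : Type*} [NormedAddCommGroup E] [NormedSpace ℝ E]
    {U : Set E} {φ : E → ℝ} (hconc : ConcaveOn ℝ U φ)
    {u v : E} (hu : u ∈ U) (hv : v ∈ U) (hd : DifferentiableAt ℝ φ u) :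
    φ v ≤ φ u + fderiv ℝ φ u (v - u) := by
  set d := fderiv ℝ φ u (v - u) with hdd
  have hg : HasDerivAt (fun t : ℝ => u + t • (v - u)) (v - u) 0 := by
    simpa using ((hasDerivAt_id (0:ℝ)).smul_const (v - u)).const_add u
  have hD : HasDerivAt (fun t : ℝ => φ (u + t • (v - u))) d 0 := by
    have hφ : HasFDerivAt φ (fderiv ℝ φ u) ((fun t : ℝ => u + t • (v - u)) 0) := by
      simpa using hd.hasFDerivAt
    exact hφ.comp_hasDerivAt 0 hg
  have hslope : Tendsto (slope (fun t : ℝ => φ (u + t • (v - u))) 0) (𝓝[>] 0) (𝓝 d) :=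
    (hasDerivAt_iff_tendsto_slope.mp hD).mono_left
      (nhdsWithin_mono _ (fun x hx => ne_of_gt hx))
  have hev : ∀ᶠ t in 𝓝[>] (0:ℝ),
      φ v - φ u ≤ slope (fun t : ℝ => φ (u + t • (v - u))) 0 t := by
    filter_upwards [Ioo_mem_nhdsGT_of_mem (by norm_num : (0:ℝ) ∈ Ico (0:ℝ) 1)] with t ht
    have ht0 : 0 < t := ht.1
    have ht1 : t < 1 := ht.2
    have hcomb : (1 - t) * φ u + t * φ v ≤ φ ((1 - t) • u + t • v) := by
      have := hconc.2 hu hv (by linarith : (0:ℝ) ≤ 1 - t) (le_of_lt ht0) (by ring)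
      simpa using this
    have hrw : u + t • (v - u) = (1 - t) • u + t • v := by
      simp [smul_sub, sub_smul]; abel
    rw [slope_def_field]
    simp only [zero_smul, add_zero, sub_zero, hrw]
    rw [le_div_iff₀ ht0]
    nlinarith [hcomb]
  have := ge_of_tendsto hslope hev
  linarith

/-- Multiplicative Legendre duality: for a 1-homogeneous concave function `φ`, positive
exactly on an open convex cone `U`, the interior of `C₁ = {l : l ≥ φ on U}` is contained in
the set of multiples `r • dφ(u)` with `r ≥ 1`, `u ∈ U`, which in turn is contained in `C₁`. -/
theorem stmt1 (n : ℕ) (U : Set (Fin n → ℝ)) (hne : U.Nonempty) (hopen : IsOpen U)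
    (hconv : Convex ℝ U) (hcone : ∀ x ∈ U, ∀ t : ℝ, 0 < t → t • x ∈ U)
    (φ : (Fin n → ℝ) → ℝ) (hcont : Continuous φ)
    (hdiff : ∀ u ∈ U, DifferentiableAt ℝ φ u)
    (hconc : ConcaveOn ℝ U φ)
    (hhom : ∀ t : ℝ, 0 < t → ∀ x : Fin n → ℝ, φ (t • x) = t * φ x)
    (hpos : ∀ u ∈ U, 0 < φ u)
    (hzero : ∀ x : Fin n → ℝ, x ∉ U → φ x = 0) :
    interior {l : (Fin n → ℝ) →L[ℝ] ℝ | ∀ u ∈ U, φ u ≤ l u} ⊆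
        {l : (Fin n → ℝ) →L[ℝ] ℝ | ∃ r : ℝ, 1 ≤ r ∧ ∃ u ∈ U, l = r • fderiv ℝ φ u} ∧
      {l : (Fin n → ℝ) →L[ℝ] ℝ | ∃ r : ℝ, 1 ≤ r ∧ ∃ u ∈ U, l = r • fderiv ℝ φ u} ⊆
        {l : (Fin n → ℝ) →L[ℝ] ℝ | ∀ u ∈ U, φ u ≤ l u} := by
  -- facts about U
  have hUin : ∀ x, 0 < φ x → x ∈ U := by
    intro x hx
    by_contra h
    rw [hzero x h] at hx
    exact lt_irrefl _ hx
  have h0U : (0 : Fin n → ℝ) ∉ U := by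
    intro h
    have h2 := hhom 2 (by norm_num) 0
    rw [smul_zero] at h2
    have := hpos 0 h
    linarith
  constructor
  · -- hard inclusion
    intro l hl
    have hlC : ∀ u ∈ U, φ u ≤ l u := interior_subset hl
    -- ball around l
    obtain ⟨ε, hε, hball⟩ := Metric.isOpen_iff.mp isOpen_interior l hl
    -- coercivity
    have hcoer : ∀ u ∈ U, φ u + ε / 2 * ‖u‖ ≤ l u := by
      intro u hu
      have hu0 : u ≠ 0 := fun h => h0U (h ▸ hu)
      obtain ⟨g, hg1, hgu⟩ := exists_dual_vector ℝ u (norm_ne_zero_iff.mpr hu0)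
      have hmem : l - (ε / 2) • g ∈ Metric.ball l ε := by
        simp only [Metric.mem_ball, dist_eq_norm]
        have h' : l - (ε / 2) • g - l = -((ε / 2) • g) := by abel
        have h'' := norm_smul (ε / 2) g
        rw [h', norm_neg, h'', hg1, mul_one, Real.norm_eq_abs,
          abs_of_pos (by linarith : (0:ℝ) < ε / 2)]
        linarith
      have := (interior_subset (hball hmem)) u hu
      simp only [ContinuousLinearMap.sub_apply, ContinuousLinearMap.smul_apply,
        smul_eq_mul] at this
      rw [hgu] at this
      simp only [RCLike.ofReal_real_eq_id, id] at this
      linarith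
    -- base point in K
    obtain ⟨u₀, hu₀⟩ := hne
    have hφ₀ : 0 < φ u₀ := hpos u₀ hu₀
    set v₀ : Fin n → ℝ := (φ u₀)⁻¹ • u₀ with hv₀
    have hv₀U : v₀ ∈ U := hcone u₀ hu₀ _ (inv_pos.mpr hφ₀)
    have hφv₀ : φ v₀ = 1 := by
      rw [hv₀, hhom _ (inv_pos.mpr hφ₀) u₀]
      field_simp
    -- compact set
    set K : Set (Fin n → ℝ) := {v | 1 ≤ φ v} ∩ {v | l v ≤ l v₀} with hK
    have hKU : ∀ v ∈ K, v ∈ U := fun v hv => hUin v (lt_of_lt_of_le one_pos hv.1)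
    have hKc : IsCompact K := by
      apply Metric.isCompact_of_isClosed_isBounded
      · exact (isClosed_le continuous_const hcont).inter
          (isClosed_le l.continuous continuous_const)
      · rw [isBounded_iff_forall_norm_le]
        refine ⟨(l v₀ - 1) / (ε / 2), fun v hv => ?_⟩
        have hvU := hKU v hv
        have h1 := hcoer v hvU
        have h2 : (1:ℝ) ≤ φ v := hv.1
        have h3 : l v ≤ l v₀ := hv.2
        rw [le_div_iff₀ (by linarith : (0:ℝ) < ε / 2)]
        nlinarith [norm_nonneg v]
    have hKne : K.Nonempty := ⟨v₀, by simp [hK, hφv₀]⟩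
    obtain ⟨w0, hw0K, hmin⟩ := hKc.exists_isMinOn hKne l.continuous.continuousOn
    have hw0U : w0 ∈ U := hKU w0 hw0K
    have hminall : ∀ v, 1 ≤ φ v → l w0 ≤ l v := by
      intro v hv
      by_cases h : l v ≤ l v₀
      · exact hmin ⟨hv, h⟩
      · have hv₀K : v₀ ∈ K := ⟨le_of_eq hφv₀.symm, show l v₀ ≤ l v₀ from le_rfl⟩
        exact le_trans (hmin hv₀K) (le_of_not_ge h)
    have hlw01 : (1:ℝ) ≤ l w0 := le_trans hw0K.1 (hlC w0 hw0U)
    -- φ w0 = 1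
    have hφw0 : φ w0 = 1 := by
      by_contra h
      have hgt : 1 < φ w0 := lt_of_le_of_ne hw0K.1 (Ne.symm h)
      have hφw0pos : 0 < φ w0 := by linarith
      have htU : (φ w0)⁻¹ • w0 ∈ U := hcone w0 hw0U _ (inv_pos.mpr hφw0pos)
      have hφt : φ ((φ w0)⁻¹ • w0) = 1 := by
        rw [hhom _ (inv_pos.mpr hφw0pos) w0]; field_simp
      have := hminall _ (le_of_eq hφt.symm)
      rw [map_smul] at this
      simp only [smul_eq_mul] at this
      have hm := mul_inv_cancel₀ (ne_of_gt hφw0pos)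
      nlinarith [mul_le_mul_of_nonneg_left this (le_of_lt hφw0pos)]
    set F := fderiv ℝ φ w0 with hF
    have hdw0 := hdiff w0 hw0U
    have heuler : F w0 = 1 := by rw [hF, euler_aux hhom hdw0, hφw0]
    -- first order condition
    have hstep : ∀ w, 0 < F w → 0 ≤ l w := by
      intro w hw
      have hg : HasDerivAt (fun t : ℝ => w0 + t • w) w 0 := by
        simpa using ((hasDerivAt_id (0:ℝ)).smul_const w).const_add w0
      have hD : HasDerivAt (fun t : ℝ => φ (w0 + t • w)) (F w) 0 := by
        have hφd : HasFDerivAt φ F ((fun t : ℝ => w0 + t • w) 0) := by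
          simpa [hF] using hdw0.hasFDerivAt
        exact hφd.comp_hasDerivAt 0 hg
      have hslope : Tendsto (slope (fun t : ℝ => φ (w0 + t • w)) 0) (𝓝[>] 0) (𝓝 (F w)) :=
        (hasDerivAt_iff_tendsto_slope.mp hD).mono_left
          (nhdsWithin_mono _ (fun x hx => ne_of_gt hx))
      have hev := hslope.eventually (eventually_gt_nhds hw)
      obtain ⟨t, ht, hts⟩ := (hev.and self_mem_nhdsWithin).exists
      have ht0 : (0:ℝ) < t := hts
      rw [slope_def_field] at ht
      simp only [zero_smul, add_zero, sub_zero] at ht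
      rw [lt_div_iff₀ ht0] at ht
      have h1le : 1 ≤ φ (w0 + t • w) := by rw [hφw0] at ht; nlinarith
      have := hminall _ h1le
      simp only [map_add, map_smul, smul_eq_mul] at this
      nlinarith
    have hker : ∀ w, F w = 0 → 0 ≤ l w := by
      intro w hw
      by_contra h
      push_neg at h
      set s : ℝ := -l w / (2 * l w0) with hs
      have hlw00 : (0:ℝ) < l w0 := by linarith
      have hspos : 0 < s := div_pos (by linarith) (by linarith)
      have hFws : 0 < F (w + s • w0) := by
        rw [map_add, map_smul, heuler, hw]
        simpa using hspos
      have h2 := hstep _ hFws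
      rw [map_add, map_smul] at h2
      simp only [smul_eq_mul] at h2
      have hne' : l w0 ≠ 0 := ne_of_gt hlw00
      have hs2 : s * l w0 = -l w / 2 := by
        rw [hs]; field_simp
      rw [hs2] at h2
      linarith
    refine ⟨l w0, hlw01, w0, hw0U, ?_⟩
    ext w
    have h1 : F (w - F w • w0) = 0 := by
      rw [map_sub, map_smul, heuler]
      simp
    have h2 := hker _ h1
    have h3 := hker _ (by rw [map_neg, h1, neg_zero] : F (-(w - F w • w0)) = 0)
    rw [map_neg] at h3
    have h4 : l (w - F w • w0) = 0 := le_antisymm (by linarith) h2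
    rw [map_sub, map_smul] at h4
    simp only [smul_eq_mul] at h4
    simp only [ContinuousLinearMap.smul_apply, smul_eq_mul]
    linarith [h4]
  · -- easy inclusion
    rintro l ⟨r, hr, u, hu, rfl⟩ v hv
    have hdu := hdiff u hu
    have hgi := grad_ineq hconc hu hv hdu
    rw [map_sub, euler_aux hhom hdu] at hgi
    have hFv : φ v ≤ fderiv ℝ φ u v := by linarith
    have hφv : 0 < φ v := hpos v hv
    simp only [ContinuousLinearMap.smul_apply, smul_eq_mul]
    nlinarith
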